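/- Let H be a transitive subgroup of the symmetric group S_n with n ≥ 2. Then there exists an element σ ∈ H such that σ(i) ≠ i for all i ∈ {1, ..., n} (i.e., H contains a fixed-point-free permutation). -/
import Mathlib

theorem transitive_subgroup_has_fixed_point_free_element
    (n : ℕ) (hn : 2 ≤ n) (H : Subgroup (Equiv.Perm (Fin n)))
    (htrans : ∀ i j : Fin n, ∃ σ ∈ H, σ i = j) :
    ∃ σ ∈ H, ∀ i : Fin n, σ i ≠ i := by
  classical
  by_contra hcon
  push_neg at hcon
  haveI : MulAction.IsPretransitive H (Fin n) := by
    constructor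
    intro i j
    obtain ⟨σ, hσ, h⟩ := htrans i j
    exact ⟨⟨σ, hσ⟩, h⟩
  haveI : Fintype (MulAction.orbitRel.Quotient H (Fin n)) := Fintype.ofFinite _
  have hΩ : Fintype.card (MulAction.orbitRel.Quotient H (Fin n)) = 1 := by
    rw [Fintype.card_eq_one_iff]
    refine ⟨Quotient.mk'' ⟨0, by omega⟩, ?_⟩
    rintro ⟨x⟩
    obtain ⟨σ, hσ⟩ := MulAction.exists_smul_eq H x (⟨0, by omega⟩ : Fin n)
    refine (Quotient.eq''.mpr ?_).symm
    rw [MulAction.orbitRel_apply]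
    exact MulAction.mem_orbit_iff.mpr ⟨σ, hσ⟩
  have key := MulAction.sum_card_fixedBy_eq_card_orbits_mul_card_group H (Fin n)
  rw [hΩ, one_mul] at key
  have hlt : Fintype.card H < ∑ a : H, Fintype.card (MulAction.fixedBy (Fin n) a) := by
    have : (∑ _a : H, 1) < ∑ a : H, Fintype.card (MulAction.fixedBy (Fin n) a) := by
      apply Finset.sum_lt_sum
      · intro a _
        obtain ⟨i, hi⟩ := hcon a a.2
        exact Fintype.card_pos_iff.mpr ⟨⟨i, hi⟩⟩
      · refine ⟨1, Finset.mem_univ _, ?_⟩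
        have : Fintype.card (MulAction.fixedBy (Fin n) (1 : H)) = n := by
          have : MulAction.fixedBy (Fin n) (1 : H) = Set.univ := by
            ext x; simp [MulAction.fixedBy]
          calc Fintype.card (MulAction.fixedBy (Fin n) (1 : H))
              = Fintype.card (Set.univ : Set (Fin n)) :=
                Fintype.card_congr (Equiv.setCongr this)
            _ = n := (Fintype.card_congr (Equiv.Set.univ (Fin n))).trans (Fintype.card_fin n)
        omega
    simpa using this
  omega
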